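/- arXiv:1803.08818 — 2 statements merged into one kernel-verified Lean document; each statement's English description precedes it below -/
import Mathlib

section
/- Let n ≥ 4. The number s_n of distinct pyramidal sequences of vectors of size n satisfies s_n = s_{n-1} + ∑_{i=2}^{n-2} d_{i,n}·s_{n-i}, where d_{i,n} is the number of trapezoidal sequences of height i of size n (equivalently |D_{i,n}|). -/
/-- Vector of consecutive differences of a list. -/
def diffs (l : List ℕ) : List ℕ := List.zipWith (fun a b => b - a) l l.tail

/-- Δ(X): consecutive differences of the increasing enumeration of a finite set. -/
def setDiffs (X : Finset ℕ) : List ℕ := diffs (X.sort (· ≤ ·))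

/-- c̄(Δ) = {c, c+d₁, c+d₁+d₂, ...}. -/
def barSet (c : ℕ) (ds : List ℕ) : Finset ℕ :=
  ((List.range (ds.length + 1)).map (fun j => c + (ds.take j).sum)).toFinset

/-- A finite set (of cardinality ≥ 2) is periodic if its consecutive differences are constant. -/
def PeriodicSet (X : Finset ℕ) : Prop :=
  2 ≤ X.card ∧ ∃ d, 0 < d ∧ setDiffs X = List.replicate (X.card - 1) d

/-- A vector is periodic if all its entries are equal to some positive d. -/
def PerVec (v : List ℕ) : Prop := ∃ d, 0 < d ∧ v = List.replicate v.length d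

/-- Membership in D_{|u|,n}: injective word over [n], complement periodic,
no proper nonempty prefix has a periodic complement. -/
def MemD (n : ℕ) (u : List ℕ) : Prop :=
  u.Nodup ∧ (∀ x ∈ u, x ∈ Finset.Icc 1 n) ∧
  PeriodicSet (Finset.Icc 1 n \ u.toFinset) ∧
  ∀ j, 1 ≤ j → j < u.length → ¬ PeriodicSet (Finset.Icc 1 n \ (u.take j).toFinset)

/-- A list is a permutation word of [n]. -/
def IsPermList (n : ℕ) (s : List ℕ) : Prop :=
  s.length = n ∧ s.Nodup ∧ s.toFinset = Finset.Icc 1 n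

/-- s is the inverse permutation word of u (both permutations of [n]). -/
def InvPerm (n : ℕ) (u s : List ℕ) : Prop :=
  IsPermList n u ∧ IsPermList n s ∧
  ∀ j k, j < n → k < n → (u.getD j 0 = k + 1 ↔ s.getD k 0 = j + 1)

/-- Δ_i(s): consecutive differences of {s_i, ..., s_n} (1-indexed). -/
def deltaVec (s : List ℕ) (i : ℕ) : List ℕ := setDiffs (s.drop (i - 1)).toFinset

/-- One transition of a pyramidal sequence: merge two adjacent entries,
or delete the leftmost, or delete the rightmost entry. -/
def PyrStep (v w : List ℕ) : Prop :=
  (∃ l a b r, v = l ++ a :: b :: r ∧ w = l ++ (a + b) :: r) ∨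
  (∃ a r, v = a :: r ∧ w = r) ∨
  (∃ l a, v = l ++ [a] ∧ w = l)

/-- A pyramidal sequence of vectors of size n, encoded as a list [Δ₁, ..., Δ_{n-1}]. -/
def IsPyramidal (n : ℕ) (P : List (List ℕ)) : Prop :=
  P.length = n - 1 ∧ P.getD 0 [] = List.replicate (n - 1) 1 ∧
  ∀ i, i + 1 < n - 1 → PyrStep (P.getD i []) (P.getD (i + 1) [])

/-- A trapezoidal sequence of height i of size n, encoded as [Δ₁, ..., Δ_{i+1}]:
Δ_{i+1} periodic, Δ_j not periodic for 2 ≤ j ≤ i. -/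
def IsTrapezoidal (n i : ℕ) (T : List (List ℕ)) : Prop :=
  T.length = i + 1 ∧ T.getD 0 [] = List.replicate (n - 1) 1 ∧
  (∀ j, j < i → PyrStep (T.getD j []) (T.getD (j + 1) [])) ∧
  PerVec (T.getD i []) ∧
  ∀ j, 1 ≤ j → j < i → ¬ PerVec (T.getD j [])

/-- Non-interval permutation of [m]: no prefix of length l, 2 ≤ l < m, has as
letter set an interval of consecutive integers. -/
def IsNonIntervalPerm (m : ℕ) (s : List ℕ) : Prop :=
  IsPermList m s ∧ ∀ l, 2 ≤ l → l < m → ¬ ∃ a, (s.take l).toFinset = Finset.Icc a (a + l - 1)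

/-- v is obtained from u by a rigid shift of height h by k places to the left:
columns of height < h are untouched and receive nothing; each position of height ≥ h
receives the excess (over h) of the column k places to its right; every block strictly
above the cut lands on a column of height ≥ h. -/
def RigidShiftL (n h k : ℕ) (u v : List ℕ) : Prop :=
  IsPermList n u ∧ IsPermList n v ∧
  (∀ j, j < n → u.getD j 0 < h → v.getD j 0 = u.getD j 0) ∧
  (∀ j, j < n → h ≤ u.getD j 0 → v.getD j 0 = h + (u.getD (j + k) 0 - h)) ∧
  (∀ j, j < n → h < u.getD j 0 → k ≤ j ∧ h ≤ u.getD (j - k) 0)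

/-- Strong shift equivalence: finite sequences of rigid shifts (in either direction). -/
def StrongShiftEq (n : ℕ) (u v : List ℕ) : Prop :=
  Relation.ReflTransGen (fun a b => ∃ h k, RigidShiftL n h k a b ∨ RigidShiftL n h k b a) u v

/-- Shift equivalence: finite sequences of rigid shifts and reversals. -/
def ShiftEq (n : ℕ) (u v : List ℕ) : Prop :=
  Relation.ReflTransGen
    (fun a b => (∃ h k, RigidShiftL n h k a b ∨ RigidShiftL n h k b a) ∨ b = a.reverse) u v

/-- Super-strong Wilf equivalence of permutation words of [n], characterized by
equality of all Δ_i of the inverses. -/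
def SSWilf (n : ℕ) (u v : List ℕ) : Prop :=
  ∃ s t, InvPerm n u s ∧ InvPerm n v t ∧ ∀ i, 1 ≤ i → i ≤ n - 1 → deltaVec s i = deltaVec t i


lemma pyrStep_length {v w : List ℕ} (h : PyrStep v w) : w.length + 1 = v.length := by
  rcases h with ⟨l,a,b,r,rfl,rfl⟩ | ⟨a,r,rfl,rfl⟩ | ⟨l,a,rfl,rfl⟩ <;> simp <;> omega

lemma pyrStep_mem {v w : List ℕ} (h : PyrStep v w) {Q : ℕ → Prop}
    (hadd : ∀ a b, Q a → Q b → Q (a+b)) (hv : ∀ x ∈ v, Q x) : ∀ x ∈ w, Q x := by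
  rcases h with ⟨l,a,b,r,rfl,rfl⟩ | ⟨a,r,rfl,rfl⟩ | ⟨l,a,rfl,rfl⟩ <;> intro x hx
  · simp only [List.mem_append, List.mem_cons] at hx hv
    rcases hx with hx | hx | hx
    · exact hv x (Or.inl hx)
    · subst hx; exact hadd a b (hv a (Or.inr (Or.inl rfl))) (hv b (Or.inr (Or.inr (Or.inl rfl))))
    · exact hv x (Or.inr (Or.inr (Or.inr hx)))
  · exact hv x (List.mem_cons_of_mem _ hx)
  · exact hv x (List.mem_append_left _ hx)

lemma pyrStep_map_mul {v w : List ℕ} (d : ℕ) (h : PyrStep v w) :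
    PyrStep (v.map (d * ·)) (w.map (d * ·)) := by
  rcases h with ⟨l,a,b,r,rfl,rfl⟩ | ⟨a,r,rfl,rfl⟩ | ⟨l,a,rfl,rfl⟩
  · exact Or.inl ⟨l.map (d*·), d*a, d*b, r.map (d*·), by simp, by simp [Nat.mul_add]⟩
  · exact Or.inr (Or.inl ⟨d*a, w.map (d*·), by simp, rfl⟩)
  · exact Or.inr (Or.inr ⟨w.map (d*·), d*a, by simp, rfl⟩)

lemma pyrStep_map_div {v w : List ℕ} (d : ℕ) (hv : ∀ x ∈ v, d ∣ x) (h : PyrStep v w) :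
    PyrStep (v.map (· / d)) (w.map (· / d)) := by
  rcases h with ⟨l,a,b,r,rfl,rfl⟩ | ⟨a,r,rfl,rfl⟩ | ⟨l,a,rfl,rfl⟩
  · refine Or.inl ⟨l.map (·/d), a/d, b/d, r.map (·/d), by simp, ?_⟩
    have ha : d ∣ a := hv a (by simp)
    simp only [List.map_append, List.map_cons]
    rw [Nat.add_div_of_dvd_right ha]
  · exact Or.inr (Or.inl ⟨a/d, w.map (·/d), by simp, rfl⟩)
  · exact Or.inr (Or.inr ⟨w.map (·/d), a/d, by simp, rfl⟩)

-- getD helpers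
lemma getD_lt {α : Type*} {l : List α} {i : ℕ} (d : α) (h : i < l.length) : l.getD i d = l[i] :=
  List.getD_eq_getElem l d h

lemma getD_take {α : Type*} {l : List α} {i k : ℕ} (d : α) (h : i < k) :
    (l.take k).getD i d = l.getD i d := by
  by_cases h2 : i < l.length
  · rw [getD_lt d h2, getD_lt d (by simp; omega), List.getElem_take]
  · rw [List.getD_eq_default _ _ (by simp; omega), List.getD_eq_default _ _ (by omega)]

lemma getD_drop {α : Type*} {l : List α} {i k : ℕ} (d : α) (h : k + i < l.length) :
    (l.drop k).getD i d = l.getD (k + i) d := by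
  rw [getD_lt d (by simp; omega), getD_lt d h, List.getElem_drop]

lemma getD_append_left {α : Type*} {l m : List α} {i : ℕ} (d : α) (h : i < l.length) :
    (l ++ m).getD i d = l.getD i d := by
  rw [getD_lt d (by simp; omega), getD_lt d h, List.getElem_append_left]

lemma getD_append_right {α : Type*} {l m : List α} {i : ℕ} (d : α) (h : l.length ≤ i) :
    (l ++ m).getD i d = m.getD (i - l.length) d := by
  by_cases h2 : i < l.length + m.length
  · rw [getD_lt d (by simp; omega), getD_lt d (by omega), List.getElem_append_right h]
  · rw [List.getD_eq_default _ _ (by simp; omega), List.getD_eq_default _ _ (by omega)]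

lemma getD_map (f : List ℕ → List ℕ) {l : List (List ℕ)} {i : ℕ} (h : i < l.length) :
    (l.map f).getD i [] = f (l.getD i []) := by
  rw [getD_lt [] (by simpa), getD_lt [] h, List.getElem_map]

lemma chain_ind {Q : ℕ → List ℕ → Prop} {P : List (List ℕ)}
    (hstep : ∀ i, i + 1 < P.length → PyrStep (P.getD i []) (P.getD (i+1) []))
    (hQ : ∀ j v w, PyrStep v w → Q j v → Q (j+1) w)
    (h0 : Q 0 (P.getD 0 [])) : ∀ j, j < P.length → Q j (P.getD j []) := by
  intro j
  induction j with
  | zero => intro _; exact h0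
  | succ k ih => intro h; exact hQ k _ _ (hstep k h) (ih (by omega))

lemma pyrStep_sum {v w : List ℕ} (h : PyrStep v w) : w.sum ≤ v.sum := by
  rcases h with ⟨l,a,b,r,rfl,rfl⟩ | ⟨a,r,rfl,rfl⟩ | ⟨l,a,rfl,rfl⟩ <;> simp <;> omega

lemma perVec_singleton {a : ℕ} (ha : 0 < a) : PerVec [a] := ⟨a, ha, rfl⟩

lemma perVec_replicate {k d : ℕ} (hd : 0 < d) : PerVec (List.replicate k d) :=
  ⟨d, hd, by simp⟩

lemma perVec_head {v : List ℕ} (h : PerVec v) (hv : v ≠ []) :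
    v = List.replicate v.length (v.headD 1) := by
  obtain ⟨d, hd, hrep⟩ := h
  have hne : v.length ≠ 0 := by simpa using hv
  obtain ⟨k, hk⟩ := Nat.exists_eq_succ_of_ne_zero hne
  have hhead : v.headD 1 = d := by rw [hrep, hk]; simp [List.replicate_succ]
  rw [hhead]; exact hrep

lemma perVec_head_pos {v : List ℕ} (h : PerVec v) (hv : v ≠ []) : 0 < v.headD 1 := by
  obtain ⟨d, hd, hrep⟩ := h
  have hne : v.length ≠ 0 := by simpa using hv
  obtain ⟨k, hk⟩ := Nat.exists_eq_succ_of_ne_zero hne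
  have hhead : v.headD 1 = d := by rw [hrep, hk]; simp [List.replicate_succ]
  omega

lemma step_from_replicate {m : ℕ} {w : List ℕ} (hm : 3 ≤ m)
    (h : PyrStep (List.replicate m 1) w) (hw : PerVec w) : w = List.replicate (m-1) 1 := by
  rcases h with ⟨l,a,b,r,hv,rfl⟩ | ⟨a,r,hv,rfl⟩ | ⟨l,a,hv,rfl⟩
  · -- merge case: contradiction
    exfalso
    have ha : a = 1 := List.eq_of_mem_replicate (b := a) (by rw [hv]; simp)
    have hb : b = 1 := List.eq_of_mem_replicate (b := b) (by rw [hv]; simp)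
    subst ha hb
    have hlen : l.length + r.length + 2 = m := by
      have := congrArg List.length hv; simp at this; omega
    obtain ⟨d, hd, hrep⟩ := hw
    have h2d : (1 + 1 : ℕ) = d := by
      have h2 : (1 + 1 : ℕ) ∈ l ++ (1 + 1) :: r := by simp
      rw [hrep] at h2; exact List.eq_of_mem_replicate h2
    have h1d : (1 : ℕ) = d := by
      rcases l with _ | ⟨x, l'⟩
      · rcases r with _ | ⟨y, r'⟩
        · simp at hlen; omega
        · have hy : y = 1 := List.eq_of_mem_replicate (b := y) (by rw [hv]; simp)
          have h1 : y ∈ ([] : List ℕ) ++ (1 + 1) :: y :: r' := by simp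
          rw [hrep] at h1; rw [← hy]; exact List.eq_of_mem_replicate h1
      · have hx : x = 1 := List.eq_of_mem_replicate (b := x) (by rw [hv]; simp)
        have h1 : x ∈ (x :: l') ++ (1 + 1) :: r := by simp
        rw [hrep] at h1; rw [← hx]; exact List.eq_of_mem_replicate h1
    omega
  · have h2 : List.replicate m 1 = 1 :: List.replicate (m-1) 1 := by
      rw [← List.replicate_succ]; congr 1; omega
    rw [h2] at hv
    injection hv with _ h3
    exact h3.symm
  · have hlen : w.length = m - 1 := by
      have := congrArg List.length hv; simp at this; omega
    have hmem : ∀ x ∈ w, x = 1 := by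
      intro x hx
      exact List.eq_of_mem_replicate (b := x) (by rw [hv]; exact List.mem_append_left _ hx)
    rw [← hlen]
    exact List.eq_replicate_of_mem hmem

lemma levels_invariant {n : ℕ} {P : List (List ℕ)}
    (h0 : P.getD 0 [] = List.replicate (n-1) 1)
    (hstep : ∀ i, i+1 < P.length → PyrStep (P.getD i []) (P.getD (i+1) []))
    : ∀ j, j < P.length → (P.getD j []).length + j = n - 1 ∧ (∀ x ∈ P.getD j [], 0 < x) ∧
      (P.getD j []).sum ≤ n - 1 := by
  refine chain_ind (Q := fun j v => v.length + j = n - 1 ∧ (∀ x ∈ v, 0 < x) ∧ v.sum ≤ n - 1)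
    hstep ?_ ?_
  · intro j v w hs hQ
    refine ⟨by have := pyrStep_length hs; omega,
      pyrStep_mem hs (fun a b ha hb => by omega) hQ.2.1,
      le_trans (pyrStep_sum hs) hQ.2.2⟩
  · rw [h0]
    refine ⟨by simp, ?_, by simp⟩
    intro x hx
    rw [List.eq_of_mem_replicate hx]; omega

lemma exists_map_val {α β : Type*} (f : β → α) (s : Set α) (hs : ∀ a ∈ s, ∃ b, f b = a) :
    ∀ v : List α, (∀ x ∈ v, x ∈ s) → ∃ l : List β, l.map f = v := by
  intro v
  induction v with
  | nil => intro _; exact ⟨[], rfl⟩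
  | cons a t ih =>
    intro h
    obtain ⟨b, hb⟩ := hs a (h a (by simp))
    obtain ⟨l, hl⟩ := ih (fun x hx => h x (by simp [hx]))
    exact ⟨b :: l, by simp [hb, hl]⟩

lemma finite_S1 (n : ℕ) : {v : List ℕ | v.length ≤ n ∧ ∀ x ∈ v, x ≤ n}.Finite := by
  apply Set.Finite.subset (Set.Finite.image (List.map (Fin.val : Fin (n+1) → ℕ))
    (List.finite_length_le (Fin (n+1)) n))
  intro v ⟨hlen, hmem⟩
  obtain ⟨l, hl⟩ := exists_map_val (Fin.val : Fin (n+1) → ℕ) {x : ℕ | x ≤ n}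
    (fun a ha => ⟨⟨a, Nat.lt_succ_of_le ha⟩, rfl⟩) v hmem
  refine ⟨l, ?_, hl⟩
  have := congrArg List.length hl
  simp only [List.length_map] at this
  show l.length ≤ n
  omega

lemma finite_S2 (n : ℕ) :
    {P : List (List ℕ) | P.length ≤ n ∧ ∀ v ∈ P, v.length ≤ n ∧ ∀ x ∈ v, x ≤ n}.Finite := by
  have h1 := finite_S1 n
  have : Finite ↥{v : List ℕ | v.length ≤ n ∧ ∀ x ∈ v, x ≤ n} := h1.to_subtype
  apply Set.Finite.subset (Set.Finite.image
    (List.map (Subtype.val : ↥{v : List ℕ | v.length ≤ n ∧ ∀ x ∈ v, x ≤ n} → List ℕ))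
    (List.finite_length_le _ n))
  intro P ⟨hlen, hmem⟩
  obtain ⟨l, hl⟩ := exists_map_val Subtype.val {v : List ℕ | v.length ≤ n ∧ ∀ x ∈ v, x ≤ n}
    (fun a ha => ⟨⟨a, ha⟩, rfl⟩) P hmem
  refine ⟨l, ?_, hl⟩
  have := congrArg List.length hl
  simp only [List.length_map] at this
  show l.length ≤ n
  omega

lemma pyr_steps {n : ℕ} {P : List (List ℕ)} (hP : IsPyramidal n P) :
    ∀ i, i + 1 < P.length → PyrStep (P.getD i []) (P.getD (i+1) []) := by
  intro i hi; exact hP.2.2 i (hP.1 ▸ hi)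

lemma trap_steps {n i : ℕ} {T : List (List ℕ)} (hT : IsTrapezoidal n i T) :
    ∀ j, j + 1 < T.length → PyrStep (T.getD j []) (T.getD (j+1) []) := by
  intro j hj; exact hT.2.2.1 j (by rw [hT.1] at hj; omega)

lemma mem_levels {P : List (List ℕ)} {v : List ℕ} (hv : v ∈ P) :
    ∃ j, j < P.length ∧ P.getD j [] = v := by
  obtain ⟨j, hj, hjv⟩ := List.mem_iff_getElem.mp hv
  exact ⟨j, hj, by rw [getD_lt [] hj]; exact hjv⟩

lemma subset_S2 {n : ℕ} {s : Set (List (List ℕ))}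
    (h : ∀ P ∈ s, P.length ≤ n ∧ P.getD 0 [] = List.replicate (n-1) 1 ∧
      ∀ i, i + 1 < P.length → PyrStep (P.getD i []) (P.getD (i+1) [])) : s.Finite := by
  apply Set.Finite.subset (finite_S2 n)
  intro P hP
  obtain ⟨hlen, h0, hstep⟩ := h P hP
  refine ⟨hlen, ?_⟩
  intro v hv
  obtain ⟨j, hj, hjv⟩ := mem_levels hv
  obtain ⟨hl, hpos, hsum⟩ := levels_invariant h0 hstep j hj
  rw [hjv] at hl hpos hsum
  refine ⟨by omega, ?_⟩
  intro x hx
  have := List.single_le_sum (fun y _ => Nat.zero_le y) x hx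
  omega

lemma pyr_finite (n : ℕ) : {P : List (List ℕ) | IsPyramidal n P}.Finite := by
  apply subset_S2 (n := n)
  intro P hP
  exact ⟨by rw [hP.1]; omega, hP.2.1, pyr_steps hP⟩

lemma trap_finite (n i : ℕ) (hi : i + 2 ≤ n) :
    {T : List (List ℕ) | IsTrapezoidal n i T}.Finite := by
  apply subset_S2 (n := n)
  intro T hT
  exact ⟨by rw [hT.1]; omega, hT.2.1, trap_steps hT⟩

noncomputable def firstPer (P : List (List ℕ)) : ℕ := sInf {j | 1 ≤ j ∧ PerVec (P.getD j [])}

lemma firstPer_eq {P : List (List ℕ)} {i : ℕ} (h1 : 1 ≤ i) (h2 : PerVec (P.getD i []))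
    (h3 : ∀ j, 1 ≤ j → j < i → ¬ PerVec (P.getD j [])) : firstPer P = i := by
  have hmem : i ∈ {j | 1 ≤ j ∧ PerVec (P.getD j [])} := ⟨h1, h2⟩
  have hle := Nat.sInf_le hmem
  have hms := Nat.sInf_mem (⟨i, hmem⟩ : {j | 1 ≤ j ∧ PerVec (P.getD j [])}.Nonempty)
  rcases Nat.lt_or_ge (firstPer P) i with hlt | hge
  · exact absurd hms.2 (h3 _ hms.1 hlt)
  · exact le_antisymm hle hge

lemma pyr_perVec_last {n : ℕ} {P : List (List ℕ)} (hn : 4 ≤ n) (hP : IsPyramidal n P) :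
    PerVec (P.getD (n-2) []) := by
  obtain ⟨hl, hpos, _⟩ := levels_invariant hP.2.1 (pyr_steps hP) (n-2) (by rw [hP.1]; omega)
  have : (P.getD (n-2) []).length = 1 := by omega
  obtain ⟨a, ha⟩ := List.length_eq_one_iff.mp this
  rw [ha]
  exact perVec_singleton (by apply hpos; rw [ha]; simp)

lemma firstPer_spec {n : ℕ} {P : List (List ℕ)} (hn : 4 ≤ n) (hP : IsPyramidal n P) :
    1 ≤ firstPer P ∧ firstPer P ≤ n - 2 ∧ PerVec (P.getD (firstPer P) []) ∧
    ∀ j, 1 ≤ j → j < firstPer P → ¬ PerVec (P.getD j []) := by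
  have hmem : (n-2) ∈ {j | 1 ≤ j ∧ PerVec (P.getD j [])} := ⟨by omega, pyr_perVec_last hn hP⟩
  have hle := Nat.sInf_le hmem
  have hms := Nat.sInf_mem (⟨n-2, hmem⟩ : {j | 1 ≤ j ∧ PerVec (P.getD j [])}.Nonempty)
  refine ⟨hms.1, hle, hms.2, ?_⟩
  intro j hj1 hj2 hper
  have : firstPer P ≤ j :=
    Nat.sInf_le (show j ∈ {j | 1 ≤ j ∧ PerVec (P.getD j [])} from ⟨hj1, hper⟩)
  omega

lemma tail_getD {α : Type*} (P : List α) (j : ℕ) (d : α) : P.tail.getD j d = P.getD (j+1) d := by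
  cases P <;> simp [List.getD_cons_succ]

lemma cons_getD_tail {P : List (List ℕ)} (h : P ≠ []) : P.getD 0 [] :: P.tail = P := by
  cases P with
  | nil => exact absurd rfl h
  | cons a t => simp

lemma take_one_eq {α : Type*} {l : List α} (h : l ≠ []) (d : α) : l.take 1 = [l.getD 0 d] := by
  cases l with
  | nil => exact absurd rfl h
  | cons a t => simp

lemma map_div_map_mul (d : ℕ) (hd : 0 < d) (v : List ℕ) :
    (v.map (fun x => d * x)).map (· / d) = v := by
  induction v with
  | nil => rfl
  | cons a t ih => simp [Nat.mul_div_cancel_left _ hd, ih]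

lemma map_mul_map_div (d : ℕ) (v : List ℕ) (hv : ∀ x ∈ v, d ∣ x) :
    (v.map (· / d)).map (fun x => d * x) = v := by
  induction v with
  | nil => rfl
  | cons a t ih =>
    simp only [List.map_cons]
    rw [Nat.mul_div_cancel' (hv a (by simp)), ih (fun x hx => hv x (by simp [hx]))]

lemma A1_level1 {n : ℕ} {P : List (List ℕ)} (hn : 4 ≤ n) (hP : IsPyramidal n P)
    (h1 : firstPer P = 1) : P.getD 1 [] = List.replicate (n-2) 1 := by
  have hper : PerVec (P.getD 1 []) := h1 ▸ (firstPer_spec hn hP).2.2.1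
  have hstep := hP.2.2 0 (by omega)
  rw [hP.2.1] at hstep
  have := step_from_replicate (m := n-1) (by omega) hstep hper
  rw [this]; congr 1

lemma A1_forward {n : ℕ} {P : List (List ℕ)} (hn : 4 ≤ n) (hP : IsPyramidal n P)
    (h1 : firstPer P = 1) : IsPyramidal (n-1) P.tail := by
  refine ⟨?_, ?_, ?_⟩
  · rw [List.length_tail, hP.1]
  · rw [tail_getD, A1_level1 hn hP h1]; congr 1
  · intro i hi; rw [tail_getD, tail_getD]; exact hP.2.2 (i+1) (by omega)

lemma A1_backward {n : ℕ} {Q : List (List ℕ)} (hn : 4 ≤ n) (hQ : IsPyramidal (n-1) Q) :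
    IsPyramidal n (List.replicate (n-1) 1 :: Q) ∧
    firstPer (List.replicate (n-1) 1 :: Q) = 1 := by
  have hrep : List.replicate (n-1) 1 = 1 :: List.replicate (n-2) 1 := by
    rw [← List.replicate_succ]; congr 1; omega
  have hQ0 : Q.getD 0 [] = List.replicate (n-2) 1 := by
    rw [hQ.2.1]; congr 1
  have hP : IsPyramidal n (List.replicate (n-1) 1 :: Q) := by
    refine ⟨by simp [hQ.1]; omega, by simp, ?_⟩
    intro i hi
    cases i with
    | zero =>
      simp only [List.getD_cons_zero, List.getD_cons_succ]
      rw [hQ0, hrep]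
      exact Or.inr (Or.inl ⟨1, List.replicate (n-2) 1, rfl, rfl⟩)
    | succ k =>
      simp only [List.getD_cons_succ]
      exact hQ.2.2 k (by omega)
  refine ⟨hP, firstPer_eq le_rfl ?_ (by omega)⟩
  simp only [List.getD_cons_succ]
  rw [hQ0]
  exact perVec_replicate one_pos

lemma ncard_A1 {n : ℕ} (hn : 4 ≤ n) :
    {P : List (List ℕ) | IsPyramidal n P ∧ firstPer P = 1}.ncard
      = {P : List (List ℕ) | IsPyramidal (n-1) P}.ncard := by
  have hinj : Set.InjOn (fun P : List (List ℕ) => P.tail)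
      {P : List (List ℕ) | IsPyramidal n P ∧ firstPer P = 1} := by
    intro P1 h1 P2 h2 he
    have hne1 : P1 ≠ [] := by
      intro h; rw [h] at h1; have := h1.1.1; simp at this; omega
    have hne2 : P2 ≠ [] := by
      intro h; rw [h] at h2; have := h2.1.1; simp at this; omega
    rw [← cons_getD_tail hne1, ← cons_getD_tail hne2, h1.1.2.1, h2.1.2.1]
    simpa using he
  have himg : (fun P : List (List ℕ) => P.tail) ''
      {P : List (List ℕ) | IsPyramidal n P ∧ firstPer P = 1}
      = {P : List (List ℕ) | IsPyramidal (n-1) P} := by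
    ext Q
    constructor
    · rintro ⟨P, ⟨hP, h1⟩, rfl⟩
      exact A1_forward hn hP h1
    · intro hQ
      exact ⟨List.replicate (n-1) 1 :: Q, ⟨(A1_backward hn hQ).1, (A1_backward hn hQ).2⟩, by simp⟩
  rw [← himg, Set.ncard_image_of_injOn hinj]

lemma trap_last {n i : ℕ} {T : List (List ℕ)} (hn : 4 ≤ n) (hi1 : 1 ≤ i) (hin : i ≤ n-2)
    (hT : IsTrapezoidal n i T) :
    T.getD i [] = List.replicate (n-1-i) ((T.getD i []).headD 1) ∧
    0 < (T.getD i []).headD 1 := by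
  obtain ⟨hl, _, _⟩ := levels_invariant hT.2.1 (trap_steps hT) i (by rw [hT.1]; omega)
  have hlen : (T.getD i []).length = n-1-i := by omega
  have hne : T.getD i [] ≠ [] := by
    intro h; rw [h] at hlen; simp at hlen; omega
  refine ⟨?_, perVec_head_pos hT.2.2.2.1 hne⟩
  rw [← hlen]
  exact perVec_head hT.2.2.2.1 hne

lemma glue_mem {n i : ℕ} {T Q : List (List ℕ)} (hn : 4 ≤ n) (hi2 : 2 ≤ i) (hin : i ≤ n-2)
    (hT : IsTrapezoidal n i T) (hQ : IsPyramidal (n-i) Q) :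
    IsPyramidal n (T.take i ++ Q.map (List.map (fun x => (T.getD i []).headD 1 * x))) ∧
    firstPer (T.take i ++ Q.map (List.map (fun x => (T.getD i []).headD 1 * x))) = i ∧
    (T.take i ++ Q.map (List.map (fun x => (T.getD i []).headD 1 * x))).take (i+1) = T ∧
    ((T.take i ++ Q.map (List.map (fun x => (T.getD i []).headD 1 * x))).drop i).map
      (List.map (· / ((T.take i ++ Q.map (List.map (fun x => (T.getD i []).headD 1 * x))).getD i
        []).headD 1)) = Q := by
  set d := (T.getD i []).headD 1 with hd_def
  obtain ⟨hTi, hd⟩ := trap_last hn (by omega) hin hT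
  set G := T.take i ++ Q.map (List.map (fun x => d * x)) with hG_def
  have hTlen : T.length = i + 1 := hT.1
  have hTtake : (T.take i).length = i := by rw [List.length_take]; omega
  have hQlen : Q.length = n - i - 1 := by have := hQ.1; omega
  have hGlen : G.length = n - 1 := by
    rw [hG_def, List.length_append, hTtake, List.length_map]; omega
  -- getD of G on the left part
  have hGleft : ∀ j, j < i → G.getD j [] = T.getD j [] := by
    intro j hj
    rw [hG_def, getD_append_left [] (by omega), getD_take [] hj]
  -- getD of G on the right part
  have hGright : ∀ j, i ≤ j → j < n - 1 →
      G.getD j [] = (Q.getD (j - i) []).map (fun x => d * x) := by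
    intro j hj1 hj2
    rw [hG_def, getD_append_right [] (by omega), hTtake, getD_map _ (by omega)]
  have hQ0 : Q.getD 0 [] = List.replicate (n-i-1) 1 := by
    rw [hQ.2.1]
  have hGi : G.getD i [] = T.getD i [] := by
    rw [hGright i le_rfl (by omega), Nat.sub_self, hQ0, List.map_replicate, hTi]
    congr 1 <;> omega
  have hpyr : IsPyramidal n G := by
    refine ⟨hGlen, ?_, ?_⟩
    · rw [hGleft 0 (by omega)]; exact hT.2.1
    · intro j hj
      rcases Nat.lt_or_ge (j+1) i with hc | hc
      · rw [hGleft j (by omega), hGleft (j+1) hc]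
        exact hT.2.2.1 j (by omega)
      · rcases Nat.eq_or_lt_of_le hc with hc2 | hc2
        · -- j + 1 = i
          rw [hGleft j (by omega)]
          have h3 : G.getD (j+1) [] = T.getD (j+1) [] := by rw [← hc2]; exact hGi
          rw [h3]
          exact hT.2.2.1 j (by omega)
        · -- i ≤ j
          rw [hGright j (by omega) (by omega), hGright (j+1) (by omega) (by omega)]
          have : j + 1 - i = (j - i) + 1 := by omega
          rw [this]
          exact pyrStep_map_mul d (hQ.2.2 (j-i) (by omega))
  have hfp : firstPer G = i := by
    apply firstPer_eq (by omega)
    · rw [hGi, hTi]; exact perVec_replicate hd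
    · intro j hj1 hj2
      rw [hGleft j hj2]
      exact hT.2.2.2.2 j hj1 hj2
  have hQne : Q ≠ [] := by
    intro h; rw [h] at hQlen; simp at hQlen; omega
  have htake : G.take (i+1) = T := by
    rw [hG_def, List.take_append, List.take_take, hTtake]
    have h1 : min (i+1) i = i := by omega
    have h2 : i + 1 - i = 1 := by omega
    rw [h1, h2, take_one_eq (l := Q.map (List.map fun x => d * x)) (by simpa using hQne) [],
      getD_map _ (by omega : 0 < Q.length), hQ0, List.map_replicate]
    have h3 : List.replicate (n-i-1) (d * 1) = T.getD i [] := by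
      rw [hTi]
      congr 1
      · omega
      · rw [mul_one]
    rw [h3, getD_lt [] (by omega : i < T.length)]
    have h4 : T = T.take i ++ [T[i]] := by
      conv_lhs => rw [← List.take_length (l := T), hTlen]
      rw [List.take_succ, List.getElem?_eq_getElem (by omega)]
      simp
    conv_rhs => rw [h4]
  have hdrop : (G.drop i).map (List.map (· / (G.getD i []).headD 1)) = Q := by
    rw [hGi, ← hd_def, hG_def, List.drop_left' hTtake, List.map_map]
    have : ∀ v ∈ Q, (List.map (· / d) ∘ List.map (fun x => d * x)) v = id v := by
      intro v _
      simp only [Function.comp_apply, id_eq]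
      exact map_div_map_mul d hd v
    rw [List.map_congr_left this, List.map_id]
  exact ⟨hpyr, hfp, htake, hdrop⟩

lemma decomp_mem {n i : ℕ} {P : List (List ℕ)} (hn : 4 ≤ n) (hi2 : 2 ≤ i) (hin : i ≤ n-2)
    (hP : IsPyramidal n P) (hfp : firstPer P = i) :
    IsTrapezoidal n i (P.take (i+1)) ∧
    IsPyramidal (n-i) ((P.drop i).map (List.map (· / (P.getD i []).headD 1))) ∧
    (P.take (i+1)).take i ++ ((P.drop i).map (List.map (· / (P.getD i []).headD 1))).map
      (List.map (fun x => ((P.take (i+1)).getD i []).headD 1 * x)) = P := by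
  set d := (P.getD i []).headD 1 with hd_def
  obtain ⟨_, _, hper', hmin'⟩ := firstPer_spec hn hP
  have hper : PerVec (P.getD i []) := hfp ▸ hper'
  have hmin : ∀ j, 1 ≤ j → j < i → ¬ PerVec (P.getD j []) := hfp ▸ hmin'
  obtain ⟨hli, _, _⟩ := levels_invariant hP.2.1 (pyr_steps hP) i (by rw [hP.1]; omega)
  have hlen : (P.getD i []).length = n-1-i := by omega
  have hne : P.getD i [] ≠ [] := by intro h; rw [h] at hlen; simp at hlen; omega
  have hPi : P.getD i [] = List.replicate (n-1-i) d := by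
    rw [← hlen]; exact perVec_head hper hne
  have hd : 0 < d := perVec_head_pos hper hne
  have hdropget : ∀ k, i + k < n - 1 → (P.drop i).getD k [] = P.getD (i+k) [] := by
    intro k hk; exact getD_drop [] (by rw [hP.1]; omega)
  have hdroplen : (P.drop i).length = n - 1 - i := by rw [List.length_drop, hP.1]
  have hdvd : ∀ j, i ≤ j → j < n-1 → ∀ x ∈ P.getD j [], d ∣ x := by
    have hsteps : ∀ k, k + 1 < (P.drop i).length →
        PyrStep ((P.drop i).getD k []) ((P.drop i).getD (k+1) []) := by
      intro k hk
      rw [hdropget k (by omega), hdropget (k+1) (by omega)]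
      have : i + (k+1) = (i+k) + 1 := by omega
      rw [this]
      exact hP.2.2 (i+k) (by omega)
    have hci := chain_ind (Q := fun k v => ∀ x ∈ v, d ∣ x) hsteps
      (fun j v w hs hQv => pyrStep_mem hs (fun a b ha hb => dvd_add ha hb) hQv)
      (by rw [hdropget 0 (by omega), Nat.add_zero, hPi]
          intro x hx; rw [List.eq_of_mem_replicate hx])
    intro j hj1 hj2 x hx
    have := hci (j - i) (by omega)
    rw [hdropget (j-i) (by omega)] at this
    have he : i + (j - i) = j := by omega
    rw [he] at this
    exact this x hx
  have htakeget : ∀ j, j < i + 1 → (P.take (i+1)).getD j [] = P.getD j [] := by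
    intro j hj; exact getD_take [] hj
  have htrap : IsTrapezoidal n i (P.take (i+1)) := by
    refine ⟨by rw [List.length_take, hP.1]; omega, ?_, ?_, ?_, ?_⟩
    · rw [htakeget 0 (by omega)]; exact hP.2.1
    · intro j hj
      rw [htakeget j (by omega), htakeget (j+1) (by omega)]
      exact hP.2.2 j (by omega)
    · rw [htakeget i (by omega)]; exact hper
    · intro j hj1 hj2
      rw [htakeget j (by omega)]
      exact hmin j hj1 hj2
  have hqget : ∀ k, i + k < n - 1 →
      ((P.drop i).map (List.map (· / d))).getD k [] = (P.getD (i+k) []).map (· / d) := by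
    intro k hk
    rw [getD_map _ (by omega), hdropget k hk]
  have hpyr : IsPyramidal (n-i) ((P.drop i).map (List.map (· / d))) := by
    refine ⟨by rw [List.length_map, hdroplen]; omega, ?_, ?_⟩
    · rw [hqget 0 (by omega), Nat.add_zero, hPi, List.map_replicate]
      rw [Nat.div_self hd]
      congr 1
      omega
    · intro k hk
      rw [hqget k (by omega), hqget (k+1) (by omega)]
      have : i + (k+1) = (i+k) + 1 := by omega
      rw [this]
      exact pyrStep_map_div d (hdvd (i+k) (by omega) (by omega)) (hP.2.2 (i+k) (by omega))
  refine ⟨htrap, hpyr, ?_⟩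
  have he : ((P.take (i+1)).getD i []).headD 1 = d := by rw [htakeget i (by omega)]
  rw [he, List.take_take, min_eq_left (by omega : i ≤ i + 1), List.map_map]
  have hcongr : ∀ v ∈ P.drop i, (List.map (fun x => d * x) ∘ List.map (· / d)) v = id v := by
    intro v hv
    obtain ⟨k, hk, hkv⟩ := mem_levels hv
    simp only [Function.comp_apply, id_eq]
    apply map_mul_map_div
    rw [← hkv, hdropget k (by rw [hdroplen] at hk; omega)]
    exact hdvd (i+k) (by omega) (by rw [hdroplen] at hk; omega)
  rw [List.map_congr_left hcongr, List.map_id, List.take_append_drop]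

lemma ncard_prod' {α β : Type*} (s : Set α) (t : Set β) :
    (s ×ˢ t).ncard = s.ncard * t.ncard := by
  rw [← Nat.card_coe_set_eq, ← Nat.card_coe_set_eq, ← Nat.card_coe_set_eq,
    ← Nat.card_prod]
  exact Nat.card_congr (Equiv.Set.prod s t)

lemma ncard_Ai {n i : ℕ} (hn : 4 ≤ n) (hi2 : 2 ≤ i) (hin : i ≤ n-2) :
    {P : List (List ℕ) | IsPyramidal n P ∧ firstPer P = i}.ncard
      = {T : List (List ℕ) | IsTrapezoidal n i T}.ncard
        * {Q : List (List ℕ) | IsPyramidal (n-i) Q}.ncard := by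
  set g : List (List ℕ) → List (List ℕ) × List (List ℕ) :=
    fun P => (P.take (i+1), (P.drop i).map (List.map (· / (P.getD i []).headD 1))) with hg
  have hglue : ∀ P ∈ {P : List (List ℕ) | IsPyramidal n P ∧ firstPer P = i},
      (g P).1.take i ++ (g P).2.map (List.map (fun x => ((g P).1.getD i []).headD 1 * x)) = P := by
    intro P hP
    exact (decomp_mem hn hi2 hin hP.1 hP.2).2.2
  have hinj : Set.InjOn g {P : List (List ℕ) | IsPyramidal n P ∧ firstPer P = i} := by
    intro P1 h1 P2 h2 he
    rw [← hglue P1 h1, ← hglue P2 h2, he]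
  have himg : g '' {P : List (List ℕ) | IsPyramidal n P ∧ firstPer P = i}
      = {T : List (List ℕ) | IsTrapezoidal n i T} ×ˢ
        {Q : List (List ℕ) | IsPyramidal (n-i) Q} := by
    ext ⟨T, Q⟩
    constructor
    · rintro ⟨P, hP, heq⟩
      obtain ⟨ht, hq, _⟩ := decomp_mem hn hi2 hin hP.1 hP.2
      have h1 : (g P).1 = T := congrArg Prod.fst heq
      have h2 : (g P).2 = Q := congrArg Prod.snd heq
      rw [hg] at h1 h2
      simp only at h1 h2
      rw [← h1, ← h2]
      exact ⟨ht, hq⟩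
    · rintro ⟨hT, hQ⟩
      obtain ⟨hpyr, hfp, htake, hdrop⟩ := glue_mem hn hi2 hin hT hQ
      refine ⟨T.take i ++ Q.map (List.map (fun x => (T.getD i []).headD 1 * x)),
        ⟨hpyr, hfp⟩, ?_⟩
      rw [hg]
      exact Prod.ext htake hdrop
  rw [← ncard_prod', ← himg, Set.ncard_image_of_injOn hinj]

theorem stmt15 (n : ℕ) (hn : 4 ≤ n) :
    Nat.card {P : List (List ℕ) | IsPyramidal n P} =
      Nat.card {P : List (List ℕ) | IsPyramidal (n - 1) P} +
      ∑ i ∈ Finset.Icc 2 (n - 2),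
        Nat.card {T : List (List ℕ) | IsTrapezoidal n i T} *
          Nat.card {P : List (List ℕ) | IsPyramidal (n - i) P} := by
  classical
  have hA : {P : List (List ℕ) | IsPyramidal n P}.Finite := pyr_finite n
  simp only [Nat.card_coe_set_eq]
  have hfib : ∀ P ∈ hA.toFinset, firstPer P ∈ Finset.Icc 1 (n-2) := by
    intro P hP
    rw [Set.Finite.mem_toFinset] at hP
    obtain ⟨h1, h2, _, _⟩ := firstPer_spec hn hP
    rw [Finset.mem_Icc]
    exact ⟨h1, h2⟩
  have hcard := Finset.card_eq_sum_card_fiberwise hfib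
  rw [Set.ncard_eq_toFinset_card _ hA, hcard]
  have hfilter : ∀ i, (hA.toFinset.filter (fun P => firstPer P = i)).card
      = {P : List (List ℕ) | IsPyramidal n P ∧ firstPer P = i}.ncard := by
    intro i
    have hfin : {P : List (List ℕ) | IsPyramidal n P ∧ firstPer P = i}.Finite :=
      hA.subset (fun P hP => hP.1)
    rw [Set.ncard_eq_toFinset_card _ hfin]
    congr 1
    ext P
    simp [Set.Finite.mem_toFinset, Finset.mem_filter]
  have hsplit : Finset.Icc 1 (n-2) = insert 1 (Finset.Icc 2 (n-2)) := by
    ext x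
    simp only [Finset.mem_Icc, Finset.mem_insert]
    omega
  rw [hsplit, Finset.sum_insert (by simp)]
  congr 1
  · rw [hfilter 1, ncard_A1 hn]
  · apply Finset.sum_congr rfl
    intro i hi
    rw [Finset.mem_Icc] at hi
    rw [hfilter i, ncard_Ai hn hi.1 hi.2]
end

section
/- Two permutations u, v ∈ S_n are strongly shift equivalent (one can be obtained from the other by a finite sequence of rigid shifts) if and only if they are super-strongly Wilf equivalent, i.e., Δ_i(u^{-1}) = Δ_i(v^{-1}) for all i ∈ [n-1]. -/
namespace Stmt17


def Qset (n i : ℕ) (u : List ℕ) : Finset ℕ :=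
  (Finset.range n).filter (fun j => i ≤ u.getD j 0)

lemma mem_Qset {n i : ℕ} {u : List ℕ} {j : ℕ} :
    j ∈ Qset n i u ↔ j < n ∧ i ≤ u.getD j 0 := by
  simp [Qset]

lemma perm_getD_mem {n : ℕ} {u : List ℕ} (hu : IsPermList n u) {j : ℕ} (hj : j < n) :
    u.getD j 0 ∈ Finset.Icc 1 n := by
  obtain ⟨hlen, hnd, hfin⟩ := hu
  rw [← hfin, List.getD_eq_getElem u 0 (by omega)]
  exact List.mem_toFinset.2 (List.getElem_mem (by omega))

lemma perm_getD_pos {n : ℕ} {u : List ℕ} (hu : IsPermList n u) {j : ℕ} (hj : j < n) :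
    1 ≤ u.getD j 0 := (Finset.mem_Icc.1 (perm_getD_mem hu hj)).1

lemma perm_getD_le {n : ℕ} {u : List ℕ} (hu : IsPermList n u) (j : ℕ) :
    u.getD j 0 ≤ n := by
  rcases Nat.lt_or_ge j n with h | h
  · exact (Finset.mem_Icc.1 (perm_getD_mem hu h)).2
  · rw [List.getD_eq_default u 0 (by have := hu.1; omega)]
    omega

lemma perm_getD_zero {n : ℕ} {u : List ℕ} (hu : IsPermList n u) {j : ℕ} (hj : n ≤ j) :
    u.getD j 0 = 0 := List.getD_eq_default u 0 (by have := hu.1; omega)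

lemma lt_of_getD_pos {n : ℕ} {u : List ℕ} (hu : IsPermList n u) {j : ℕ}
    (h : 0 < u.getD j 0) : j < n := by
  by_contra hc
  rw [perm_getD_zero hu (by omega)] at h
  omega

lemma perm_getD_inj {n : ℕ} {u : List ℕ} (hu : IsPermList n u) {j1 j2 : ℕ}
    (h1 : j1 < n) (h2 : j2 < n) (he : u.getD j1 0 = u.getD j2 0) : j1 = j2 := by
  obtain ⟨hlen, hnd, -⟩ := hu
  rw [List.getD_eq_getElem u 0 (show j1 < u.length by omega),
    List.getD_eq_getElem u 0 (show j2 < u.length by omega)] at he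
  exact (List.Nodup.getElem_inj_iff hnd).1 he

lemma perm_surj {n : ℕ} {u : List ℕ} (hu : IsPermList n u) {x : ℕ}
    (hx : x ∈ Finset.Icc 1 n) : ∃ j, j < n ∧ u.getD j 0 = x := by
  obtain ⟨hlen, hnd, hfin⟩ := hu
  rw [← hfin, List.mem_toFinset] at hx
  obtain ⟨j, hj, hval⟩ := List.mem_iff_getElem.1 hx
  exact ⟨j, by omega, by rw [List.getD_eq_getElem u 0 hj]; exact hval⟩

lemma card_Qset {n : ℕ} {u : List ℕ} (hu : IsPermList n u) {i : ℕ} (hi : 1 ≤ i) :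
    (Qset n i u).card = n + 1 - i := by
  have himg : (Qset n i u).image (fun j => u.getD j 0) = Finset.Icc i n := by
    ext x
    simp only [Finset.mem_image, mem_Qset, Finset.mem_Icc]
    constructor
    · rintro ⟨j, ⟨hj, hij⟩, rfl⟩
      exact ⟨hij, perm_getD_le hu j⟩
    · rintro ⟨hix, hxn⟩
      obtain ⟨j, hj, hval⟩ := perm_surj hu (Finset.mem_Icc.2 ⟨by omega, hxn⟩)
      exact ⟨j, ⟨hj, by omega⟩, hval⟩
  have hinj : Set.InjOn (fun j => u.getD j 0) (Qset n i u) := by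
    intro a ha b hb he
    exact perm_getD_inj hu (mem_Qset.1 ha).1 (mem_Qset.1 hb).1 he
  have := Finset.card_image_of_injOn hinj
  rw [himg, Nat.card_Icc] at this
  omega

lemma qset_zero (n : ℕ) (u : List ℕ) : Qset n 0 u = Finset.range n := by
  ext j; simp [Qset]

lemma qset_one {n : ℕ} {u : List ℕ} (hu : IsPermList n u) :
    Qset n 1 u = Finset.range n := by
  ext j
  simp only [mem_Qset, Finset.mem_range]
  exact ⟨fun h => h.1, fun h => ⟨h, perm_getD_pos hu h⟩⟩

lemma qset_high {n : ℕ} {u : List ℕ} (hu : IsPermList n u) {i : ℕ} (hi : n < i) :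
    Qset n i u = ∅ := by
  ext j
  simp only [mem_Qset, Finset.notMem_empty, iff_false, not_and, not_le]
  intro hj
  have := perm_getD_le hu j
  omega

lemma perm_eq_of_Qset {n : ℕ} {u v : List ℕ} (hu : IsPermList n u) (hv : IsPermList n v)
    (hQ : ∀ i, Qset n i u = Qset n i v) : u = v := by
  have key : ∀ j, j < n → u.getD j 0 = v.getD j 0 := by
    intro j hj
    have h1 : j ∈ Qset n (u.getD j 0) u := mem_Qset.2 ⟨hj, le_refl _⟩
    have h2 : j ∈ Qset n (v.getD j 0) v := mem_Qset.2 ⟨hj, le_refl _⟩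
    rw [hQ] at h1; rw [← hQ] at h2
    have := (mem_Qset.1 h1).2
    have := (mem_Qset.1 h2).2
    omega
  apply List.ext_getElem (by rw [hu.1, hv.1])
  intro j h1 h2
  have hj : j < n := by have := hu.1; omega
  have := key j hj
  rwa [List.getD_eq_getElem u 0 h1, List.getD_eq_getElem v 0 h2] at this



lemma diffs_cons_cons (a b : ℕ) (t : List ℕ) :
    diffs (a :: b :: t) = (b - a) :: diffs (b :: t) := rfl

lemma diffs_map_add (k : ℕ) : ∀ l : List ℕ, diffs (l.map (· + k)) = diffs l
  | [] => rfl
  | [a] => rfl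
  | a :: b :: t => by
    have ih := diffs_map_add k (b :: t)
    simp only [List.map_cons] at ih ⊢
    rw [diffs_cons_cons, diffs_cons_cons, ih, Nat.add_sub_add_right]

lemma toFinset_map_list (f : ℕ → ℕ) : ∀ l : List ℕ, (l.map f).toFinset = l.toFinset.image f
  | [] => rfl
  | a :: t => by
    simp [List.toFinset_cons, Finset.image_insert, toFinset_map_list f t]

lemma sort_image_add (X : Finset ℕ) (k : ℕ) :
    (X.image (· + k)).sort (· ≤ ·) = (X.sort (· ≤ ·)).map (· + k) := by
  have hperm : ((X.image (· + k)).sort (· ≤ ·)).Perm ((X.sort (· ≤ ·)).map (· + k)) := by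
    apply List.perm_of_nodup_nodup_toFinset_eq (Finset.sort_nodup _ _)
      ((Finset.sort_nodup _ _).map (add_left_injective k))
    rw [Finset.sort_toFinset, toFinset_map_list, Finset.sort_toFinset]
  have hs2 : List.Pairwise (· ≤ ·) ((X.sort (· ≤ ·)).map (· + k)) :=
    List.Pairwise.map _ (fun a b h => by simpa using h) (Finset.pairwise_sort _ _)
  exact hperm.eq_of_pairwise' (Finset.pairwise_sort _ _) hs2

lemma setDiffs_image_add (X : Finset ℕ) (k : ℕ) :
    setDiffs (X.image (· + k)) = setDiffs X := by
  unfold setDiffs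
  rw [sort_image_add, diffs_map_add]

lemma setDiffs_card_one {X : Finset ℕ} (h : X.card = 1) : setDiffs X = [] := by
  obtain ⟨a, ha⟩ := Finset.card_eq_one.1 h
  subst ha
  unfold setDiffs
  rw [Finset.sort_singleton]
  rfl

lemma diffs_head_aux (k : ℕ) : ∀ (t1 : List ℕ) (a b : ℕ) (t2 : List ℕ),
    List.Pairwise (· < ·) (a :: t1) → List.Pairwise (· < ·) (b :: t2) →
    diffs (a :: t1) = diffs (b :: t2) → t1.length = t2.length → b = a + k →
    b :: t2 = (a :: t1).map (· + k)
  | [], a, b, t2, _, _, _, hlen, hb => by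
    cases t2 with
    | nil => simp [hb]
    | cons c t => simp at hlen
  | a' :: t1, a, b, t2, h1, h2, hd, hlen, hb => by
    cases t2 with
    | nil => simp at hlen
    | cons b' t2 =>
      have ha : a < a' := (List.pairwise_cons.1 h1).1 _ List.mem_cons_self
      have hbb : b < b' := (List.pairwise_cons.1 h2).1 _ List.mem_cons_self
      rw [diffs_cons_cons, diffs_cons_cons] at hd
      have hd1 : a' - a = b' - b := (List.cons.injEq _ _ _ _ ▸ hd).1
      have hd2 : diffs (a' :: t1) = diffs (b' :: t2) := (List.cons.injEq _ _ _ _ ▸ hd).2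
      have hb' : b' = a' + k := by omega
      have ih := diffs_head_aux k t1 a' b' t2 (List.pairwise_cons.1 h1).2
        (List.pairwise_cons.1 h2).2 hd2 (by simpa using hlen) hb'
      simp only [List.map_cons] at ih ⊢
      rw [← ih, hb]

lemma translate_of_setDiffs {X Y : Finset ℕ} (hne : X.Nonempty)
    (hcard : X.card = Y.card) (hd : setDiffs X = setDiffs Y) :
    ∃ k, Y = X.image (· + k) ∨ X = Y.image (· + k) := by
  have hlen : (X.sort (· ≤ ·)).length = (Y.sort (· ≤ ·)).length := by
    rw [Finset.length_sort, Finset.length_sort, hcard]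
  have hXne : (X.sort (· ≤ ·)).length ≠ 0 := by
    rw [Finset.length_sort]
    exact (Finset.card_pos.2 hne).ne'
  obtain ⟨a, tX, hX⟩ : ∃ a t, X.sort (· ≤ ·) = a :: t := by
    cases hx : X.sort (· ≤ ·) with
    | nil => exact absurd (by rw [hx]; rfl) hXne
    | cons a t => exact ⟨a, t, rfl⟩
  obtain ⟨b, tY, hY⟩ : ∃ b t, Y.sort (· ≤ ·) = b :: t := by
    cases hy : Y.sort (· ≤ ·) with
    | nil => rw [hy, hX] at hlen; simp at hlen
    | cons b t => exact ⟨b, t, rfl⟩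
  have hsX : List.Pairwise (· < ·) (a :: tX) := hX ▸ (Finset.sortedLT_sort X).pairwise
  have hsY : List.Pairwise (· < ·) (b :: tY) := hY ▸ (Finset.sortedLT_sort Y).pairwise
  have hd' : diffs (a :: tX) = diffs (b :: tY) := by
    have := hd; unfold setDiffs at this; rwa [hX, hY] at this
  have hlen' : tX.length = tY.length := by
    rw [hX, hY] at hlen; simpa using hlen
  rcases le_total a b with hab | hab
  · refine ⟨b - a, Or.inl ?_⟩
    have := diffs_head_aux (b - a) tX a b tY hsX hsY hd' hlen' (by omega)
    calc Y = (Y.sort (· ≤ ·)).toFinset := (Finset.sort_toFinset _ _).symm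
    _ = ((a :: tX).map (· + (b - a))).toFinset := by rw [hY, this]
    _ = (a :: tX).toFinset.image (· + (b - a)) := toFinset_map_list _ _
    _ = X.image (· + (b - a)) := by rw [← hX, Finset.sort_toFinset]
  · refine ⟨a - b, Or.inr ?_⟩
    have := diffs_head_aux (a - b) tY b a tX hsY hsX hd'.symm hlen'.symm (by omega)
    calc X = (X.sort (· ≤ ·)).toFinset := (Finset.sort_toFinset _ _).symm
    _ = ((b :: tY).map (· + (a - b))).toFinset := by rw [hX, this]
    _ = (b :: tY).toFinset.image (· + (a - b)) := toFinset_map_list _ _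
    _ = Y.image (· + (a - b)) := by rw [← hY, Finset.sort_toFinset]

lemma shift_Qset {n h k : ℕ} {a b : List ℕ} (R : RigidShiftL n h k a b) :
    (∀ i, i ≤ h → Qset n i b = Qset n i a) ∧
    (∀ i, h < i → (Qset n i b).image (· + k) = Qset n i a) := by
  obtain ⟨ha, hb, r3, r4, r5⟩ := R
  constructor
  · intro i hi
    ext j
    simp only [mem_Qset]
    constructor
    · rintro ⟨hj, hij⟩
      refine ⟨hj, ?_⟩
      rcases Nat.lt_or_ge (a.getD j 0) h with hc | hc
      · rw [r3 j hj hc] at hij; exact hij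
      · omega
    · rintro ⟨hj, hij⟩
      refine ⟨hj, ?_⟩
      rcases Nat.lt_or_ge (a.getD j 0) h with hc | hc
      · rw [r3 j hj hc]; exact hij
      · rw [r4 j hj hc]; omega
  · intro i hi
    ext x
    simp only [Finset.mem_image, mem_Qset]
    constructor
    · rintro ⟨j, ⟨hj, hij⟩, rfl⟩
      have hc : h ≤ a.getD j 0 := by
        by_contra hc
        rw [r3 j hj (by omega)] at hij
        omega
      rw [r4 j hj hc] at hij
      have hjk : i ≤ a.getD (j + k) 0 := by omega
      exact ⟨lt_of_getD_pos ha (by omega), hjk⟩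
    · rintro ⟨hx, hix⟩
      have h5 := r5 x hx (by omega)
      refine ⟨x - k, ⟨by omega, ?_⟩, by omega⟩
      rw [r4 (x - k) (by omega) h5.2]
      have : x - k + k = x := by omega
      rw [this]
      omega

lemma shift_setDiffs {n h k : ℕ} {a b : List ℕ} (R : RigidShiftL n h k a b) (i : ℕ) :
    setDiffs (Qset n i b) = setDiffs (Qset n i a) := by
  rcases le_or_gt i h with hi | hi
  · rw [(shift_Qset R).1 i hi]
  · rw [← (shift_Qset R).2 i hi, setDiffs_image_add]

lemma mkShift {n h k : ℕ} {u : List ℕ} (hu : IsPermList n u) (hh1 : 1 ≤ h) (hhn : h ≤ n)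
    (Hf : ∀ j, j < n → h < u.getD j 0 → k ≤ j ∧ h ≤ u.getD (j - k) 0) :
    ∃ w, RigidShiftL n h k u w := by
  set f : ℕ → ℕ := fun j => if u.getD j 0 < h then u.getD j 0 else h + (u.getD (j + k) 0 - h)
    with hf
  set w : List ℕ := List.ofFn (fun j : Fin n => f j.1) with hwdef
  have hwlen : w.length = n := by simp [hwdef]
  have hw : ∀ j, j < n → w.getD j 0 = f j := by
    intro j hj
    rw [List.getD_eq_getElem w 0 (by omega)]
    simp [hwdef]
  -- the leftover set has one element
  have hQh : (Qset n h u).card = n + 1 - h := card_Qset hu hh1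
  have hQh1 : (Qset n (h + 1) u).card = n - h := by
    have := card_Qset hu (i := h + 1) (by omega)
    omega
  have hBsub : (Qset n (h + 1) u).image (· - k) ⊆ Qset n h u := by
    intro x hx
    obtain ⟨j, hj, rfl⟩ := Finset.mem_image.1 hx
    obtain ⟨hjn, hjv⟩ := mem_Qset.1 hj
    obtain ⟨hkj, hjk⟩ := Hf j hjn (by omega)
    exact mem_Qset.2 ⟨by omega, hjk⟩
  have hBcard : ((Qset n (h + 1) u).image (· - k)).card = n - h := by
    rw [Finset.card_image_of_injOn, hQh1]
    intro x hx y hy he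
    obtain ⟨hxn, hxv⟩ := mem_Qset.1 hx
    obtain ⟨hyn, hyv⟩ := mem_Qset.1 hy
    have hkx := (Hf x hxn (by omega)).1
    have hky := (Hf y hyn (by omega)).1
    have he' : x - k = y - k := he
    omega
  have hD : (Qset n h u \ (Qset n (h + 1) u).image (· - k)).card = 1 := by
    rw [Finset.card_sdiff_of_subset hBsub, hQh, hBcard]
    omega
  -- membership of values of f
  have hfval : ∀ j, j < n → f j ∈ Finset.Icc 1 n := by
    intro j hj
    rw [hf]
    simp only
    split_ifs with hc
    · exact perm_getD_mem hu hj
    · rcases Nat.lt_or_ge h (u.getD (j + k) 0) with hc2 | hc2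
      · have hjk : j + k < n := lt_of_getD_pos hu (by omega)
        have := perm_getD_mem hu hjk
        rw [Finset.mem_Icc] at this ⊢
        omega
      · rw [Finset.mem_Icc]
        omega
  -- f is injective on [0, n)
  have hfinj : ∀ j1 j2, j1 < n → j2 < n → f j1 = f j2 → j1 = j2 := by
    intro j1 j2 h1 h2 he
    rw [hf] at he
    simp only at he
    by_cases c1 : u.getD j1 0 < h <;> by_cases c2 : u.getD j2 0 < h
    · rw [if_pos c1, if_pos c2] at he
      exact perm_getD_inj hu h1 h2 he
    · rw [if_pos c1, if_neg c2] at he; omega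
    · rw [if_neg c1, if_pos c2] at he; omega
    · rw [if_neg c1, if_neg c2] at he
      by_cases cx : u.getD (j1 + k) 0 ≤ h
      · -- f j1 = h, so also u.getD (j2+k) 0 ≤ h; both j's in the leftover singleton
        have cx2 : u.getD (j2 + k) 0 ≤ h := by omega
        have hmem : ∀ j, j < n → ¬ u.getD j 0 < h → u.getD (j + k) 0 ≤ h →
            j ∈ Qset n h u \ (Qset n (h + 1) u).image (· - k) := by
          intro j hj hcj hcjk
          rw [Finset.mem_sdiff]
          refine ⟨mem_Qset.2 ⟨hj, by omega⟩, ?_⟩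
          intro hmem
          obtain ⟨p, hp, hpe⟩ := Finset.mem_image.1 hmem
          obtain ⟨hpn, hpv⟩ := mem_Qset.1 hp
          have hkp := (Hf p hpn (by omega)).1
          have hpe' : p - k = j := hpe
          have hjp : j + k = p := by omega
          rw [← hjp] at hpv
          omega
        exact Finset.card_le_one.1 (le_of_eq hD) _ (hmem j1 h1 c1 cx) _ (hmem j2 h2 c2 cx2)
      · have cx2 : ¬ u.getD (j2 + k) 0 ≤ h := by omega
        have he' : u.getD (j1 + k) 0 = u.getD (j2 + k) 0 := by omega
        have hk1 : j1 + k < n := lt_of_getD_pos hu (by omega)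
        have hk2 : j2 + k < n := lt_of_getD_pos hu (by omega)
        have := perm_getD_inj hu hk1 hk2 he'
        omega
  have hwnd : w.Nodup := by
    rw [hwdef, List.nodup_ofFn]
    intro a b he
    exact Fin.ext (hfinj a.1 b.1 a.2 b.2 he)
  have hwperm : IsPermList n w := by
    refine ⟨hwlen, hwnd, ?_⟩
    apply Finset.eq_of_subset_of_card_le
    · intro x hx
      rw [List.mem_toFinset, hwdef, List.mem_ofFn] at hx
      obtain ⟨j, hj⟩ := hx
      exact hj ▸ hfval j.1 j.2
    · rw [List.toFinset_card_of_nodup hwnd, hwlen, Nat.card_Icc]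
      omega
  refine ⟨w, hu, hwperm, ?_, ?_, Hf⟩
  · intro j hj hc
    rw [hw j hj, hf]
    simp only
    rw [if_pos hc]
  · intro j hj hc
    rw [hw j hj, hf]
    simp only
    rw [if_neg (by omega)]

lemma drop_toFinset_eq {n : ℕ} {u s : List ℕ} (hus : InvPerm n u s) {i : ℕ} (hi : 1 ≤ i) :
    (s.drop (i - 1)).toFinset = (Qset n i u).image (· + 1) := by
  obtain ⟨hu, hs, hinv⟩ := hus
  ext p
  simp only [List.mem_toFinset, Finset.mem_image, mem_Qset]
  constructor
  · intro hp
    obtain ⟨idx, hidx, hval⟩ := List.mem_iff_getElem.1 hp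
    have hlend : (s.drop (i - 1)).length = s.length - (i - 1) := List.length_drop
    have hkn : i - 1 + idx < n := by
      have := hs.1; omega
    have hval' : s.getD (i - 1 + idx) 0 = p := by
      rw [List.getD_eq_getElem s 0 (by have := hs.1; omega)]
      rw [List.getElem_drop] at hval
      exact hval
    have hpIcc : p ∈ Finset.Icc 1 n := hval' ▸ perm_getD_mem hs hkn
    rw [Finset.mem_Icc] at hpIcc
    have hpval : s.getD (i - 1 + idx) 0 = (p - 1) + 1 := by omega
    have huval : u.getD (p - 1) 0 = (i - 1 + idx) + 1 :=
      (hinv (p - 1) (i - 1 + idx) (by omega) hkn).2 hpval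
    exact ⟨p - 1, ⟨by omega, by omega⟩, by omega⟩
  · rintro ⟨j, ⟨hj, hij⟩, rfl⟩
    have h1 : 1 ≤ u.getD j 0 := perm_getD_pos hu hj
    have hun : u.getD j 0 ≤ n := perm_getD_le hu j
    have huval : u.getD j 0 = (u.getD j 0 - 1) + 1 := by omega
    have hsval : s.getD (u.getD j 0 - 1) 0 = j + 1 :=
      (hinv j (u.getD j 0 - 1) hj (by omega)).1 huval
    apply List.mem_iff_getElem.2
    refine ⟨u.getD j 0 - 1 - (i - 1), by rw [List.length_drop]; have := hs.1; omega, ?_⟩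
    rw [List.getElem_drop]
    have harg : i - 1 + (u.getD j 0 - 1 - (i - 1)) = u.getD j 0 - 1 := by omega
    rw [← List.getD_eq_getElem s 0 (by have := hs.1; omega)]
    rw [harg, hsval]

lemma deltaVec_eq_setDiffs {n : ℕ} {u s : List ℕ} (hus : InvPerm n u s) {i : ℕ} (hi : 1 ≤ i) :
    deltaVec s i = setDiffs (Qset n i u) := by
  unfold deltaVec
  rw [drop_toFinset_eq hus hi, setDiffs_image_add]

lemma aux_ind (n : ℕ) (r : ℕ) : ∀ (u v : List ℕ), IsPermList n u → IsPermList n v →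
    (∀ i, 1 ≤ i → i ≤ n - 1 → setDiffs (Qset n i u) = setDiffs (Qset n i v)) →
    (∀ i, i + r ≤ n + 1 → Qset n i u = Qset n i v) →
    StrongShiftEq n u v := by
  induction r with
  | zero =>
    intro u v hu hv _ hQ
    have : u = v := perm_eq_of_Qset hu hv (fun i => by
      rcases le_or_gt i (n + 1) with h | h
      · exact hQ i (by omega)
      · rw [qset_high hu (by omega), qset_high hv (by omega)])
    exact this ▸ Relation.ReflTransGen.refl
  | succ r IH =>
    intro u v hu hv hD hQ
    by_cases hnew : Qset n (n + 1 - r) u = Qset n (n + 1 - r) v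
    · refine IH u v hu hv hD (fun i hi => ?_)
      rcases Nat.lt_or_ge (i + r + 1) (n + 2) with h | h
      · exact hQ i (by omega)
      · have : i = n + 1 - r := by omega
        rw [this]; exact hnew
    · set M := n + 1 - r with hMdef
      have hM0 : Qset n 0 u = Qset n 0 v := by rw [qset_zero, qset_zero]
      have hM1 : Qset n 1 u = Qset n 1 v := by rw [qset_one hu, qset_one hv]
      have h2M : 2 ≤ M := by
        rcases Nat.lt_or_ge M 2 with hc | hc
        · have : M = 0 ∨ M = 1 := by omega
          rcases this with h0 | h0 <;> rw [h0] at hnew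
          · exact absurd hM0 hnew
          · exact absurd hM1 hnew
        · exact hc
      have hMn : M ≤ n := by
        by_contra hc
        exact hnew (by rw [qset_high hu (by omega), qset_high hv (by omega)])
      have hMr : M + r = n + 1 := by omega
      set h := M - 1 with hhdef
      have hagree : ∀ i, i ≤ h → Qset n i u = Qset n i v := fun i hi => hQ i (by omega)
      have hsd : setDiffs (Qset n M u) = setDiffs (Qset n M v) := by
        rcases Nat.lt_or_ge M n with h' | h'
        · exact hD M (by omega) (by omega)
        · have hMeq : M = n := by omega
          rw [setDiffs_card_one (by rw [card_Qset hu (by omega)]; omega),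
            setDiffs_card_one (by rw [card_Qset hv (by omega)]; omega)]
      have hcard : (Qset n M u).card = (Qset n M v).card := by
        rw [card_Qset hu (by omega), card_Qset hv (by omega)]
      have hne : (Qset n M u).Nonempty := by
        apply Finset.card_pos.1
        rw [card_Qset hu (by omega)]
        omega
      obtain ⟨k, hk | hk⟩ := translate_of_setDiffs hne hcard hsd
      · -- Qset n M v = (Qset n M u).image (· + k) : shift v left by k at height h
        have Hf : ∀ j, j < n → h < v.getD j 0 → k ≤ j ∧ h ≤ v.getD (j - k) 0 := by
          intro j hj hgt
          have hjM : j ∈ Qset n M v := mem_Qset.2 ⟨hj, by omega⟩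
          rw [hk] at hjM
          obtain ⟨p, hp, rfl⟩ := Finset.mem_image.1 hjM
          obtain ⟨hpn, hpv⟩ := mem_Qset.1 hp
          refine ⟨by omega, ?_⟩
          have hph : p ∈ Qset n h u := mem_Qset.2 ⟨hpn, by omega⟩
          rw [hagree h le_rfl] at hph
          have hc : p + k - k = p := by omega
          rw [hc]
          exact (mem_Qset.1 hph).2
        obtain ⟨w, R⟩ := mkShift hv (by omega) (by omega) Hf
        have hQw := shift_Qset R
        have hQMw : Qset n M w = Qset n M u := by
          have h1 : (Qset n M w).image (· + k) = Qset n M v := hQw.2 M (by omega)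
          rw [hk] at h1
          exact Finset.image_injective (add_left_injective k) h1
        have hsse : StrongShiftEq n u w := by
          refine IH u w hu R.2.1 (fun i h1 h2 => (hD i h1 h2).trans (shift_setDiffs R i).symm)
            (fun i hi => ?_)
          rcases le_or_gt i h with hih | hih
          · rw [hagree i hih, ← hQw.1 i hih]
          · have : i = M := by omega
            rw [this, hQMw]
        exact hsse.tail ⟨h, k, Or.inr R⟩
      · -- Qset n M u = (Qset n M v).image (· + k) : shift u left by k at height h
        have Hf : ∀ j, j < n → h < u.getD j 0 → k ≤ j ∧ h ≤ u.getD (j - k) 0 := by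
          intro j hj hgt
          have hjM : j ∈ Qset n M u := mem_Qset.2 ⟨hj, by omega⟩
          rw [hk] at hjM
          obtain ⟨p, hp, rfl⟩ := Finset.mem_image.1 hjM
          obtain ⟨hpn, hpv⟩ := mem_Qset.1 hp
          refine ⟨by omega, ?_⟩
          have hph : p ∈ Qset n h v := mem_Qset.2 ⟨hpn, by omega⟩
          rw [← hagree h le_rfl] at hph
          have hc : p + k - k = p := by omega
          rw [hc]
          exact (mem_Qset.1 hph).2
        obtain ⟨w, R⟩ := mkShift hu (by omega) (by omega) Hf
        have hQw := shift_Qset R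
        have hQMw : Qset n M w = Qset n M v := by
          have h1 : (Qset n M w).image (· + k) = Qset n M u := hQw.2 M (by omega)
          rw [hk] at h1
          exact Finset.image_injective (add_left_injective k) h1
        have hsse : StrongShiftEq n w v := by
          refine IH w v R.2.1 hv
            (fun i h1 h2 => (shift_setDiffs R i).trans (hD i h1 h2)) (fun i hi => ?_)
          rcases le_or_gt i h with hih | hih
          · rw [hQw.1 i hih, hagree i hih]
          · have : i = M := by omega
            rw [this, hQMw]
        exact Relation.ReflTransGen.head ⟨h, k, Or.inl R⟩ hsse

end Stmt17
open Stmt17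

theorem stmt17 (n : ℕ) (u v s t : List ℕ) (hu : InvPerm n u s) (hv : InvPerm n v t) :
    StrongShiftEq n u v ↔ ∀ i, 1 ≤ i → i ≤ n - 1 → deltaVec s i = deltaVec t i := by
  constructor
  · intro hsse i hi1 hi2
    have key : ∀ w, StrongShiftEq n u w →
        ∀ i, setDiffs (Qset n i u) = setDiffs (Qset n i w) := by
      intro w hw
      induction hw with
      | refl => intro i; rfl
      | tail _ hbc ih =>
        intro i
        obtain ⟨h, k, hR | hR⟩ := hbc
        · exact (ih i).trans (shift_setDiffs hR i).symm
        · exact (ih i).trans (shift_setDiffs hR i)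
    rw [deltaVec_eq_setDiffs hu hi1, deltaVec_eq_setDiffs hv hi1]
    exact key v hsse i
  · intro hD
    apply aux_ind n (n + 1) u v hu.1 hv.1
    · intro i h1 h2
      rw [← deltaVec_eq_setDiffs hu h1, ← deltaVec_eq_setDiffs hv h1]
      exact hD i h1 h2
    · intro i hi
      have : i = 0 := by omega
      rw [this, qset_zero, qset_zero]
end
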